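/- The union of the sets I_1, I_2, ..., I_k equals {1, 2, ..., k(k-1)/2}, and every element i ∈ {1, ..., k(k-1)/2} belongs to exactly two of the sets I_1, ..., I_k. -/
import Mathlib


open Finset

/-- `p¹_l(a) = (l-1)k + (a - l(l-1)/2)` -/
def pOne (k l a : ℕ) : ℕ := (l - 1) * k + a - l * (l - 1) / 2

/-- `p²_l(a) = (a-1)k + (l - a(a+1)/2)` -/
def pTwo (k l a : ℕ) : ℕ := (a - 1) * k + l - a * (a + 1) / 2

/-- `I¹_l` : first-type packet indices of group `l` -/
def I1 (k l : ℕ) : Finset ℕ := (Finset.Icc 1 (k - l)).image (pOne k l)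

/-- `I²_l` : second-type packet indices of group `l` -/
def I2 (k l : ℕ) : Finset ℕ := (Finset.Icc 1 (l - 1)).image (pTwo k l)

/-- `I_l = I¹_l ∪ I²_l` -/
def Igrp (k l : ℕ) : Finset ℕ := I1 k l ∪ I2 k l

/-- triangular numbers -/
def Tn (l : ℕ) : ℕ := l * (l - 1) / 2

/-- partial sums `G k l = ∑_{j=1}^{l-1} (k - j)` -/
def Gk (k l : ℕ) : ℕ := ∑ j ∈ Finset.Ico 1 l, (k - j)

lemma Tn_succ (l : ℕ) : Tn (l + 1) = Tn l + l := by
  unfold Tn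
  cases l with
  | zero => rfl
  | succ m =>
    have h : (m + 1 + 1) * (m + 1 + 1 - 1) = (m + 1) * (m + 1 - 1) + (m + 1) * 2 := by
      simp
      ring
    rw [h, Nat.add_mul_div_right _ _ (by norm_num : (0:ℕ) < 2)]

lemma two_Tn (l : ℕ) : 2 * Tn l = l * (l - 1) := by
  induction l with
  | zero => rfl
  | succ m ih =>
    rw [Tn_succ, Nat.mul_add, ih]
    cases m with
    | zero => rfl
    | succ n =>
      simp
      ring

lemma Gk_one (k : ℕ) : Gk k 1 = 0 := by simp [Gk]

lemma Gk_succ (k l : ℕ) (hl : 1 ≤ l) : Gk k (l + 1) = Gk k l + (k - l) := by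
  unfold Gk
  rw [Finset.sum_Ico_succ_top hl]

lemma Gk_mono (k : ℕ) : Monotone (Gk k) := fun a b h =>
  Finset.sum_le_sum_of_subset (Finset.Ico_subset_Ico le_rfl h)

lemma keyL (k l : ℕ) (h1 : 1 ≤ l) (h2 : l ≤ k) : (l - 1) * k = Tn l + Gk k l := by
  induction l with
  | zero => omega
  | succ m ih =>
    by_cases hm : 1 ≤ m
    · have ihm := ih hm (by omega)
      simp only [Nat.add_sub_cancel]
      rw [Tn_succ, Gk_succ k m hm]
      have hsub : m - 1 + 1 = m := by omega
      have e : m * k = (m - 1) * k + k := by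
        conv_lhs => rw [← hsub]
        rw [Nat.add_mul, one_mul]
      rw [e, ihm]
      omega
    · have hm0 : m = 0 := by omega
      subst hm0
      simp [Gk_one, Tn]

lemma Gk_top (k : ℕ) (hk : 1 ≤ k) : Gk k k = k * (k - 1) / 2 := by
  have e := keyL k k hk le_rfl
  have t := two_Tn k
  have hcomm : (k - 1) * k = k * (k - 1) := Nat.mul_comm _ _
  rw [hcomm] at e
  have h : Gk k k = Tn k := by
    generalize k * (k - 1) = P at e t
    omega
  exact h

lemma pOne_eq (k l a : ℕ) (h1 : 1 ≤ l) (h2 : l ≤ k) : pOne k l a = Gk k l + a := by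
  have e := keyL k l h1 h2
  unfold Tn at e
  unfold pOne
  rw [e]
  generalize l * (l - 1) / 2 = t
  omega

lemma pTwo_eq (k l a : ℕ) (h1 : 1 ≤ a) (h2 : a < l) (h3 : l ≤ k) :
    pTwo k l a = Gk k a + (l - a) := by
  have e := keyL k a h1 (by omega)
  unfold Tn at e
  have e1 : a * (a + 1) / 2 = a * (a - 1) / 2 + a := by
    have h := Tn_succ a
    unfold Tn at h
    simpa [Nat.add_sub_cancel, mul_comm] using h
  unfold pTwo
  rw [e, e1]
  generalize a * (a - 1) / 2 = t
  omega

lemma rep_lt (k a b a' b' : ℕ) (ha : 1 ≤ a) (hb2 : b ≤ k - a) (hb' : 1 ≤ b') (h : a < a') :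
    Gk k a + b < Gk k a' + b' := by
  have h1 : Gk k a + b ≤ Gk k (a + 1) := by rw [Gk_succ k a ha]; omega
  have h2 : Gk k (a + 1) ≤ Gk k a' := Gk_mono k h
  omega

lemma rep_unique (k a b a' b' : ℕ) (ha : 1 ≤ a) (hb : 1 ≤ b) (hb2 : b ≤ k - a)
    (ha' : 1 ≤ a') (hb' : 1 ≤ b') (hb2' : b' ≤ k - a')
    (h : Gk k a + b = Gk k a' + b') : a = a' ∧ b = b' := by
  have haa : a = a' := by
    rcases lt_trichotomy a a' with hl | he | hg
    · exact absurd h (Nat.ne_of_lt (rep_lt k a b a' b' ha hb2 hb' hl))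
    · exact he
    · exact absurd h.symm (Nat.ne_of_lt (rep_lt k a' b' a b ha' hb2' hb hg))
  subst haa
  omega

lemma exists_rep (k : ℕ) : ∀ l i, 1 ≤ i → i ≤ Gk k l →
    ∃ a b, 1 ≤ a ∧ a + 1 ≤ l ∧ 1 ≤ b ∧ b ≤ k - a ∧ i = Gk k a + b := by
  intro l
  induction l with
  | zero => intro i h1 h2; simp [Gk] at h2; omega
  | succ m ih =>
    intro i h1 h2
    by_cases hm : 1 ≤ m
    · rw [Gk_succ k m hm] at h2
      by_cases hle : i ≤ Gk k m
      · obtain ⟨a, b, ha1, ha2, hb1, hb2, he⟩ := ih i h1 hle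
        exact ⟨a, b, ha1, by omega, hb1, hb2, he⟩
      · exact ⟨m, i - Gk k m, hm, le_rfl, by omega, by omega, by omega⟩
    · have hm0 : m = 0 := by omega
      subst hm0
      rw [Gk_one] at h2
      omega

lemma mem_Igrp (k l i : ℕ) (h1 : 1 ≤ l) (h2 : l ≤ k) :
    i ∈ Igrp k l ↔ (∃ b, 1 ≤ b ∧ b ≤ k - l ∧ i = Gk k l + b) ∨
      (∃ a, 1 ≤ a ∧ a < l ∧ i = Gk k a + (l - a)) := by
  unfold Igrp I1 I2
  simp only [Finset.mem_union, Finset.mem_image, Finset.mem_Icc]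
  constructor
  · rintro (⟨b, ⟨hb1, hb2⟩, rfl⟩ | ⟨a, ⟨ha1, ha2⟩, rfl⟩)
    · exact Or.inl ⟨b, hb1, hb2, (pOne_eq k l b h1 h2) ▸ rfl⟩
    · exact Or.inr ⟨a, ha1, by omega, (pTwo_eq k l a ha1 (by omega) h2) ▸ rfl⟩
  · rintro (⟨b, hb1, hb2, rfl⟩ | ⟨a, ha1, ha2, rfl⟩)
    · exact Or.inl ⟨b, ⟨hb1, hb2⟩, pOne_eq k l b h1 h2⟩
    · exact Or.inr ⟨a, ⟨ha1, by omega⟩, pTwo_eq k l a ha1 ha2 h2⟩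

/-- The sets `I_1,…,I_k` cover `{1,…,k(k-1)/2}` and every index belongs to
exactly two of them. -/
theorem Igrp_cover_and_double (k : ℕ) (hk : 2 ≤ k) :
    (Finset.Icc 1 k).biUnion (Igrp k) = Finset.Icc 1 (k * (k - 1) / 2) ∧
    ∀ i ∈ Finset.Icc 1 (k * (k - 1) / 2),
      ((Finset.Icc 1 k).filter (fun l => i ∈ Igrp k l)).card = 2 := by
  have hk1 : 1 ≤ k := by omega
  have GN := Gk_top k hk1
  constructor
  · ext i
    simp only [Finset.mem_biUnion, Finset.mem_Icc]
    rw [← GN]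
    constructor
    · rintro ⟨l, ⟨hl1, hl2⟩, hm⟩
      rw [mem_Igrp k l i hl1 hl2] at hm
      rcases hm with ⟨b, hb1, hb2, rfl⟩ | ⟨a, ha1, ha2, rfl⟩
      · have h1 : Gk k l + b ≤ Gk k (l + 1) := by rw [Gk_succ k l hl1]; omega
        have h2 : Gk k (l + 1) ≤ Gk k k := Gk_mono k (by omega)
        omega
      · have h1 : Gk k a + (l - a) ≤ Gk k (a + 1) := by rw [Gk_succ k a ha1]; omega
        have h2 : Gk k (a + 1) ≤ Gk k k := Gk_mono k (by omega)
        omega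
    · rintro ⟨h1, h2⟩
      obtain ⟨a, b, ha1, ha2, hb1, hb2, rfl⟩ := exists_rep k k i h1 h2
      exact ⟨a, ⟨ha1, by omega⟩,
        (mem_Igrp k a _ ha1 (by omega)).2 (Or.inl ⟨b, hb1, hb2, rfl⟩)⟩
  · intro i hi
    rw [Finset.mem_Icc, ← GN] at hi
    obtain ⟨a, b, ha1, ha2, hb1, hb2, rfl⟩ := exists_rep k k i hi.1 hi.2
    have hfil : (Finset.Icc 1 k).filter (fun l => Gk k a + b ∈ Igrp k l) = {a, a + b} := by
      ext l
      simp only [Finset.mem_filter, Finset.mem_Icc, Finset.mem_insert, Finset.mem_singleton]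
      constructor
      · rintro ⟨⟨hl1, hl2⟩, hm⟩
        rw [mem_Igrp k l _ hl1 hl2] at hm
        rcases hm with ⟨b', hb1', hb2', heq⟩ | ⟨a', ha1', ha2', heq⟩
        · obtain ⟨h, _⟩ := rep_unique k a b l b' ha1 hb1 hb2 hl1 hb1' hb2' heq
          exact Or.inl h.symm
        · have h3 : 1 ≤ l - a' := by omega
          have h4 : l - a' ≤ k - a' := by omega
          obtain ⟨h, h'⟩ := rep_unique k a b a' (l - a') ha1 hb1 hb2 ha1' h3 h4 heq
          exact Or.inr (by omega)
      · rintro (h | h)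
        · refine ⟨⟨by omega, by omega⟩, ?_⟩
          rw [h]
          exact (mem_Igrp k a _ ha1 (by omega)).2 (Or.inl ⟨b, hb1, hb2, rfl⟩)
        · refine ⟨⟨by omega, by omega⟩, ?_⟩
          rw [h]
          refine (mem_Igrp k (a + b) _ (by omega) (by omega)).2
            (Or.inr ⟨a, ha1, by omega, ?_⟩)
          congr 1
          omega
    rw [hfil]
    have hne : a ∉ ({a + b} : Finset ℕ) := by
      simp only [Finset.mem_singleton]
      omega
    rw [Finset.card_insert_of_notMem hne, Finset.card_singleton]
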